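/- Let t be a positive integer and let G = ⟨a, b | a^(3^(t+1)) = b^(3^t) = 1, b^(-1)ab = a^(1+3^t)⟩. Set x = a^(-2)b and y = a^(3^t-3)b. Then x^(3^(t+1)) = 1, y^(3^t) = 1, and y^(-1)xy = x^(1+3^t). -/

import Mathlib

def auxS (s : ℤ) : ℕ → ℤ
  | 0 => 0
  | m + 1 => 1 + s ^ 2 * auxS s m

theorem stmt_13 (t : ℕ) (ht : 0 < t) {G : Type*} [Group G] (a b : G)
    (ha : a ^ 3 ^ (t + 1) = 1) (hb : b ^ 3 ^ t = 1)
    (hrel : b⁻¹ * a * b = a ^ (1 + 3 ^ t)) :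
    (a ^ (-2 : ℤ) * b) ^ 3 ^ (t + 1) = 1 ∧
    (a ^ (3 ^ t - 3) * b) ^ 3 ^ t = 1 ∧
    (a ^ (3 ^ t - 3) * b)⁻¹ * (a ^ (-2 : ℤ) * b) * (a ^ (3 ^ t - 3) * b) =
      (a ^ (-2 : ℤ) * b) ^ (1 + 3 ^ t) := by
  have ht3 : (3:ℕ) ≤ 3 ^ t := by
    calc (3:ℕ) = 3 ^ 1 := (pow_one 3).symm
    _ ≤ 3 ^ t := Nat.pow_le_pow_right (by norm_num) ht
  set p : ℤ := 3 ^ t with hp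
  set N : ℤ := 3 ^ (t + 1) with hNdef
  have hN3 : N = 3 * p := by rw [hNdef, hp, pow_succ]; ring
  have hpp : N ∣ p * p := by
    have h : (3:ℤ) ^ (t+1) ∣ 3 ^ t * 3 ^ t := by
      rw [← pow_add]; exact pow_dvd_pow _ (by omega)
    exact h
  have hNodd : IsCoprime N (2:ℤ) := by
    rw [hNdef]; exact IsCoprime.pow_left (by norm_num [Int.isCoprime_iff_gcd_eq_one])
  have hhalf : ∀ x : ℤ, N ∣ 2 * x → N ∣ x := fun x h =>
    hNodd.dvd_of_dvd_mul_right (by rwa [mul_comm] at h)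
  -- a with integer exponents
  have haz : a ^ N = 1 := by
    have : ((3:ℤ) ^ (t+1)) = ((3 ^ (t+1) : ℕ) : ℤ) := by push_cast; ring
    rw [hNdef, this, zpow_natCast, ha]
  have hmod : ∀ k j : ℤ, N ∣ (k - j) → a ^ k = a ^ j := by
    intro k j ⟨c, hc⟩
    have hk : k = j + N * c := by linarith
    rw [hk, zpow_add, zpow_mul, haz, one_zpow, mul_one]
  have hrelz : b⁻¹ * a * b = a ^ (1 + p) := by
    rw [hrel, ← zpow_natCast a (1 + 3 ^ t)]
    congr 1
  have hconj : ∀ k : ℤ, b⁻¹ * a ^ k * b = a ^ ((1 + p) * k) := by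
    intro k
    have h1 : (b⁻¹ * a * b⁻¹⁻¹) ^ k = b⁻¹ * a ^ k * b⁻¹⁻¹ := conj_zpow
    rw [inv_inv] at h1
    rw [← h1, hrelz, ← zpow_mul]
  have hcube : N ∣ (1 + p) ^ 3 - 1 := by
    have h1 : (1 + p) ^ 3 - 1 = N + (p * p) * 3 + (p * p) * p := by rw [hN3]; ring
    rw [h1]
    exact dvd_add (dvd_add (dvd_refl N) (hpp.mul_right 3)) (hpp.mul_right p)
  have hconj' : ∀ k : ℤ, b * a ^ k * b⁻¹ = a ^ ((1 + p) ^ 2 * k) := by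
    intro k
    have h1 := hconj ((1 + p) ^ 2 * k)
    have h2 : a ^ ((1 + p) * ((1 + p) ^ 2 * k)) = a ^ k := by
      apply hmod
      have : (1 + p) * ((1 + p) ^ 2 * k) - k = ((1 + p) ^ 3 - 1) * k := by ring
      rw [this]; exact hcube.mul_right k
    rw [h2] at h1
    rw [← h1]; group
  -- main power formula
  have hpow : ∀ (v : ℤ) (m : ℕ), (a ^ v * b) ^ m = a ^ (v * auxS (1 + p) m) * b ^ m := by
    intro v m
    induction m with
    | zero => simp [auxS]
    | succ m ih =>
      rw [pow_succ' (a ^ v * b) m, ih,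
        show a ^ v * b * (a ^ (v * auxS (1 + p) m) * b ^ m)
          = a ^ v * (b * a ^ (v * auxS (1 + p) m) * b⁻¹) * (b * b ^ m) by group,
        hconj', ← zpow_add, ← pow_succ']
      congr 1
      show a ^ (v + (1 + p) ^ 2 * (v * auxS (1 + p) m)) = _
      congr 1
      simp only [auxS]; ring
  -- congruence for auxS
  have hSmod : ∀ m : ℕ, N ∣ (2 * auxS (1 + p) m - (2 * (m:ℤ) - p * ((m:ℤ) * ((m:ℤ) - 1)))) := by
    intro m
    induction m with
    | zero => simp [auxS]
    | succ m ih =>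
      obtain ⟨c, hc⟩ := ih
      obtain ⟨e, he⟩ := hpp
      refine ⟨(1 + p) ^ 2 * c + 2 * (m:ℤ) + e * (4 * (m:ℤ) - 2 * (m:ℤ)^2 - p * (m:ℤ) * ((m:ℤ) - 1)), ?_⟩
      simp only [auxS]
      push_cast
      linear_combination (1 + p) ^ 2 * hc + (4 * (m:ℤ) - 2 * (m:ℤ)^2 - p * (m:ℤ) * ((m:ℤ) - 1)) * he + 2 * (m:ℤ) * hN3
  -- casts
  have hcastN : ((3 ^ (t+1) : ℕ) : ℤ) = N := by rw [hNdef]; push_cast; ring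
  have hcastp : ((3 ^ t : ℕ) : ℤ) = p := by rw [hp]; push_cast; ring
  have hb3 : b ^ 3 ^ (t + 1) = 1 := by
    rw [pow_succ, pow_mul, hb, one_pow]
  have hone : ∀ k : ℤ, N ∣ k → a ^ k = 1 := by
    intro k hk
    have h0 := hmod k 0 (by simpa using hk)
    rwa [zpow_zero] at h0
  -- Goal 1
  have g1 : (a ^ (-2 : ℤ) * b) ^ 3 ^ (t + 1) = 1 := by
    rw [hpow (-2) (3 ^ (t + 1)), hb3, mul_one]
    apply hone
    have h := hSmod (3 ^ (t + 1))
    rw [hcastN] at h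
    have hS : N ∣ auxS (1 + p) (3 ^ (t + 1)) := by
      apply hhalf
      have h2 : N ∣ 2 * N - p * (N * (N - 1)) := ⟨2 - p * (N - 1), by ring⟩
      have h3 := dvd_add h h2
      have h4 : 2 * auxS (1 + p) (3 ^ (t+1)) - (2 * N - p * (N * (N - 1))) + (2 * N - p * (N * (N - 1))) = 2 * auxS (1 + p) (3 ^ (t+1)) := by ring
      rwa [h4] at h3
    exact hS.mul_left (-2)
  -- Goal 2
  have hu : a ^ ((3:ℕ) ^ t - 3) = a ^ (p - 3 : ℤ) := by
    rw [← zpow_natCast a (3 ^ t - 3), Nat.cast_sub ht3, hp]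
    push_cast; ring_nf
  have huS : N ∣ (p - 3) * auxS (1 + p) (3 ^ t) := by
    have h := hSmod (3 ^ t)
    rw [hcastp] at h
    obtain ⟨c, hc⟩ := h
    obtain ⟨e, he⟩ := hpp
    apply hhalf
    refine ⟨(p - 3) * c + 2 * e - 2 - e * ((p - 3) * (p - 1)), ?_⟩
    linear_combination (p - 3) * hc + (2 - (p - 3) * (p - 1)) * he - 2 * hN3
  have g2 : (a ^ (3 ^ t - 3) * b) ^ 3 ^ t = 1 := by
    rw [hu, hpow (p - 3) (3 ^ t), hb, mul_one]
    exact hone _ huS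
  -- Goal 3
  have hb1 : b ^ (1 + 3 ^ t) = b := by rw [pow_add, pow_one, hb, mul_one]
  have g3 : (a ^ (3 ^ t - 3) * b)⁻¹ * (a ^ (-2 : ℤ) * b) * (a ^ (3 ^ t - 3) * b) =
      (a ^ (-2 : ℤ) * b) ^ (1 + 3 ^ t) := by
    rw [hu, hpow (-2) (1 + 3 ^ t), hb1]
    have h1 : (a ^ (p - 3 : ℤ) * b)⁻¹ * (a ^ (-2 : ℤ) * b) * (a ^ (p - 3 : ℤ) * b)
        = (b⁻¹ * a ^ (-(p - 3) + -2) * b) * (a ^ (p - 3 : ℤ) * b) := by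
      rw [zpow_add, zpow_neg]; group
    rw [h1, hconj, show a ^ ((1 + p) * (-(p - 3) + -2)) * (a ^ (p - 3 : ℤ) * b)
        = a ^ ((1 + p) * (-(p - 3) + -2)) * a ^ (p - 3 : ℤ) * b from (mul_assoc _ _ _).symm,
      ← zpow_add]
    congr 1
    apply hmod
    have h := hSmod (1 + 3 ^ t)
    rw [show ((1 + 3 ^ t : ℕ) : ℤ) = 1 + p by push_cast [hp]; ring] at h
    obtain ⟨c, hc⟩ := h
    obtain ⟨e, he⟩ := hpp
    refine ⟨c + 1 - e * (2 + p), ?_⟩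
    linear_combination hc + (-(2 + p)) * he + hN3
  exact ⟨g1, g2, g3⟩
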